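/- Under the hypotheses of the previous statement (bounded price ratios in [a,b], Carli dispersion ε > 0 on every cycle, T fixed, w_i i.i.d. uniform on the simplex), the Selten Area A_K := P(the data (ρ, w) satisfy GARP) satisfies A_K ≥ 1 − C_T exp(−c₁ K) with c₁ = ε²/(4(b−a)²); in particular A_K → 1 as K → ∞. -/

import Mathlib

open MeasureTheory ProbabilityTheory Finset
open scoped ENNReal

/-- The uniform distribution on the simplex `Δ_{K-1}` (i.e. `Dirichlet(1,…,1)`),
realised as the law of `Y / (∑ Y)` with `Y k` i.i.d. `Exponential(1)`. -/
noncomputable def simplexUniform (K : ℕ) : Measure (Fin K → ℝ) :=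
  (Measure.pi fun _ : Fin K => ProbabilityTheory.expMeasure 1).map
    (fun Y k => Y k / ∑ j, Y j)

/-- The normalised data `(ρ, w)` satisfy GARP iff the revealed-preference graph
(edge `i → j` iff `⟨ρ_{ij}, w_j⟩ ≤ 1`, strict edge for strict inequality)
contains no directed cycle with at least one strict edge. -/
def SatisfiesGARP {T K : ℕ} (ρ : Fin T → Fin T → Fin K → ℝ)
    (w : Fin T → Fin K → ℝ) : Prop :=
  ¬ ∃ (L : ℕ) (f : Fin (L + 2) → Fin T), Function.Injective f ∧
      (∀ ℓ : Fin (L + 2), ∑ k, ρ (f ℓ) (f (ℓ + 1)) k * w (f (ℓ + 1)) k ≤ 1) ∧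
      (∃ ℓ : Fin (L + 2), ∑ k, ρ (f ℓ) (f (ℓ + 1)) k * w (f (ℓ + 1)) k < 1)

section Auxiliary

open Real

lemma aux_exp_le {x : ℝ} (hx : -(1/2 : ℝ) ≤ x) : Real.exp (x - x^2) ≤ 1 + x := by
  have h1 : (0:ℝ) < 1 + x := by linarith
  have h3 : Real.exp (x - x^2) = (Real.exp (x^2 - x))⁻¹ := by
    rw [← Real.exp_neg]; ring_nf
  rw [h3, inv_le_iff_one_le_mul₀ (Real.exp_pos _)]
  rcases le_or_gt 0 x with hx0 | hx0
  · have h2 : 1 + (x^2 - x) ≤ Real.exp (x^2 - x) := by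
      linarith [Real.add_one_le_exp (x^2 - x)]
    nlinarith [pow_nonneg hx0 3]
  · have hu : (0:ℝ) ≤ x^2 - x := by nlinarith
    have h2 : 1 + (x^2 - x) + (x^2 - x)^2/2 ≤ Real.exp (x^2 - x) := by
      have h := Real.sum_le_exp_of_nonneg hu 3
      simp [Finset.sum_range_succ] at h
      nlinarith [h]
    nlinarith [sq_nonneg x, h2]


lemma measurable_exponentialPDF (r : ℝ) : Measurable (exponentialPDF r) :=
  (measurable_exponentialPDFReal r).ennreal_ofReal


lemma lintegral_exp_neg_expMeasure {s : ℝ} (hs : -(1/2 : ℝ) ≤ s) :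
    ∫⁻ y, ENNReal.ofReal (Real.exp (-(s * y))) ∂(expMeasure 1)
      = ENNReal.ofReal (1 / (1 + s)) := by
  have h1s : (0:ℝ) < 1 + s := by linarith
  have hmg : Measurable fun y : ℝ => ENNReal.ofReal (Real.exp (-(s * y))) :=
    (((measurable_const.mul measurable_id').neg).exp).ennreal_ofReal
  have hwd : expMeasure 1 = MeasureTheory.volume.withDensity (exponentialPDF 1) := rfl
  rw [hwd, lintegral_withDensity_eq_lintegral_mul _ (measurable_exponentialPDF 1) hmg]
  have hpt : ∀ y : ℝ, (exponentialPDF 1 * fun y => ENNReal.ofReal (Real.exp (-(s * y)))) y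
      = ENNReal.ofReal (1 / (1 + s)) * exponentialPDF (1 + s) y := by
    intro y
    rcases lt_or_ge y 0 with hy | hy
    · simp [exponentialPDF_of_neg hy]
    · rw [Pi.mul_apply, exponentialPDF_of_nonneg hy, exponentialPDF_of_nonneg hy,
        ← ENNReal.ofReal_mul (by positivity), ← ENNReal.ofReal_mul (by positivity)]
      congr 1
      rw [one_mul, ← Real.exp_add]
      field_simp
      ring
  simp_rw [hpt]
  rw [lintegral_const_mul _ (measurable_exponentialPDF (1+s)),
    lintegral_exponentialPDF_eq_one h1s, mul_one]


lemma lintegral_pi_prod {n : ℕ} (μ : Measure ℝ) [SigmaFinite μ]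
    (f : Fin n → ℝ → ℝ≥0∞) (hf : ∀ i, Measurable (f i)) :
    ∫⁻ x : Fin n → ℝ, ∏ i, f i (x i) ∂Measure.pi (fun _ => μ)
      = ∏ i, ∫⁻ x, f i x ∂μ := by
  induction n with
  | zero => simp [lintegral_const, Measure.pi_univ]
  | succ n ih =>
    calc ∫⁻ x : Fin (n+1) → ℝ, ∏ i, f i (x i) ∂Measure.pi (fun _ => μ)
        = ∫⁻ p : ℝ × (Fin n → ℝ), f 0 p.1 * ∏ i : Fin n, f i.succ (p.2 i)
            ∂(μ.prod (Measure.pi fun _ => μ)) := by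
          rw [((measurePreserving_piFinSuccAbove (fun _ : Fin (n+1) => μ) 0).symm).lintegral_map_equiv]
          congr 1
          ext p
          rw [Fin.prod_univ_succ]
          simp [MeasurableEquiv.piFinSuccAbove_symm_apply, Fin.insertNthEquiv,
            Fin.insertNth_zero, Fin.zero_succAbove]
      _ = (∫⁻ x, f 0 x ∂μ) * ∫⁻ x : Fin n → ℝ, ∏ i : Fin n, f i.succ (x i)
            ∂Measure.pi (fun _ => μ) := by
          exact lintegral_prod_mul (hf 0).aemeasurable
            (Finset.measurable_prod univ fun (i : Fin n) _ => (hf i.succ).comp (measurable_pi_apply i)).aemeasurable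
      _ = ∏ i, ∫⁻ x, f i x ∂μ := by
          rw [ih (fun i => f i.succ) (fun i => hf i.succ), Fin.prod_univ_succ]


lemma chernoff_exp {K : ℕ} (c : Fin K → ℝ) (ε D : ℝ) (hε : 0 < ε) (hεD : ε < D)
    (habs : ∀ k, |c k| ≤ D) (hsum : ε * K ≤ ∑ k, c k) :
    Measure.pi (fun _ : Fin K => expMeasure 1) {Y | ∑ k, c k * Y k ≤ 0}
      ≤ ENNReal.ofReal (Real.exp (-(ε^2 / (4 * D^2)) * K)) := by
  haveI : IsProbabilityMeasure (expMeasure 1) := isProbabilityMeasure_expMeasure one_pos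
  have hD : 0 < D := lt_trans hε hεD
  set t : ℝ := ε / (2 * D^2) with ht_def
  have ht : 0 < t := by positivity
  have hs : ∀ k, -(1/2 : ℝ) ≤ t * c k := by
    intro k
    have h1 : t * |c k| ≤ t * D := by
      exact mul_le_mul_of_nonneg_left (habs k) ht.le
    have h2 : t * D < 1/2 := by
      rw [ht_def]
      rw [div_mul_eq_mul_div, div_lt_iff₀ (by positivity)]
      nlinarith
    have := neg_abs_le (t * c k)
    rw [abs_mul, abs_of_pos ht] at this
    linarith
  -- Markov
  set g : (Fin K → ℝ) → ℝ≥0∞ := fun Y => ∏ k, ENNReal.ofReal (Real.exp (-(t * c k * Y k)))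
    with hg_def
  have hgmeas : Measurable g := by
    apply Finset.measurable_prod
    intro k _
    exact (((measurable_const.mul (measurable_pi_apply k)).neg).exp).ennreal_ofReal
  have hsub : {Y : Fin K → ℝ | ∑ k, c k * Y k ≤ 0} ⊆ {Y | 1 ≤ g Y} := by
    intro Y hY
    simp only [Set.mem_setOf_eq] at hY ⊢
    show (1 : ℝ≥0∞) ≤ ∏ k, ENNReal.ofReal (Real.exp (-(t * c k * Y k)))
    have hse : ∑ k, -(t * c k * Y k) = -(t * ∑ k, c k * Y k) := by
      rw [Finset.mul_sum, ← Finset.sum_neg_distrib]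
      exact Finset.sum_congr rfl fun k _ => by ring
    have heq : ∏ k, ENNReal.ofReal (Real.exp (-(t * c k * Y k)))
        = ENNReal.ofReal (Real.exp (-(t * ∑ k, c k * Y k))) := by
      rw [← ENNReal.ofReal_prod_of_nonneg (fun k _ => (Real.exp_pos _).le), ← Real.exp_sum, hse]
    rw [heq]
    rw [show (1 : ℝ≥0∞) = ENNReal.ofReal (Real.exp 0) by simp]
    apply ENNReal.ofReal_le_ofReal
    apply Real.exp_le_exp.2
    nlinarith
  calc Measure.pi (fun _ : Fin K => expMeasure 1) {Y | ∑ k, c k * Y k ≤ 0}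
      ≤ Measure.pi (fun _ : Fin K => expMeasure 1) {Y | 1 ≤ g Y} := measure_mono hsub
    _ ≤ ∫⁻ Y, g Y ∂Measure.pi (fun _ : Fin K => expMeasure 1) := by
        simpa using mul_meas_ge_le_lintegral₀ hgmeas.aemeasurable 1
    _ = ∏ k, ∫⁻ y, ENNReal.ofReal (Real.exp (-(t * c k * y))) ∂expMeasure 1 := by
        rw [hg_def]
        exact lintegral_pi_prod _ _
          (fun k => (((measurable_const.mul measurable_id').neg).exp).ennreal_ofReal)
    _ = ∏ k, ENNReal.ofReal (1 / (1 + t * c k)) := by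
        exact Finset.prod_congr rfl fun k _ => lintegral_exp_neg_expMeasure (hs k)
    _ ≤ ∏ k, ENNReal.ofReal (Real.exp ((t * c k)^2 - t * c k)) := by
        apply Finset.prod_le_prod' <;> try skip
        intro k _
        apply ENNReal.ofReal_le_ofReal
        have h1 : (0:ℝ) < 1 + t * c k := by have := hs k; linarith
        rw [div_le_iff₀ h1]
        calc (1:ℝ) = Real.exp (t * c k - (t * c k)^2) * Real.exp ((t * c k)^2 - t * c k) := by
              rw [← Real.exp_add,
                show (t * c k - (t * c k)^2) + ((t * c k)^2 - t * c k) = 0 by ring, Real.exp_zero]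
          _ ≤ (1 + t * c k) * Real.exp ((t * c k)^2 - t * c k) := by
              apply mul_le_mul_of_nonneg_right (aux_exp_le (hs k)) (Real.exp_pos _).le
          _ = Real.exp ((t * c k)^2 - t * c k) * (1 + t * c k) := by ring
    _ ≤ ENNReal.ofReal (Real.exp (-(ε^2 / (4 * D^2)) * K)) := by
        rw [← ENNReal.ofReal_prod_of_nonneg (fun k _ => (Real.exp_pos _).le), ← Real.exp_sum]
        apply ENNReal.ofReal_le_ofReal
        apply Real.exp_le_exp.2
        have h1 : ∑ k, ((t * c k)^2 - t * c k) ≤ (K : ℝ) * (t^2 * D^2) - t * (ε * K) := by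
          rw [Finset.sum_sub_distrib]
          have h2 : ∑ k, (t * c k)^2 ≤ (K : ℝ) * (t^2 * D^2) := by
            calc ∑ k, (t * c k)^2 ≤ ∑ _k : Fin K, t^2 * D^2 := by
                  apply Finset.sum_le_sum
                  intro k _
                  have := habs k
                  have h3 : (c k)^2 ≤ D^2 := sq_le_sq' (by linarith [neg_abs_le (c k)]) (le_trans (le_abs_self _) this)
                  calc (t * c k)^2 = t^2 * (c k)^2 := by ring
                    _ ≤ t^2 * D^2 := by nlinarith [sq_nonneg t]
              _ = (K : ℝ) * (t^2 * D^2) := by rw [Finset.sum_const, Finset.card_univ, Fintype.card_fin, nsmul_eq_mul]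
          have h3 : t * (ε * K) ≤ t * ∑ k, c k := by
            apply mul_le_mul_of_nonneg_left _ ht.le
            exact hsum
          rw [Finset.mul_sum] at h3
          linarith
        refine le_trans h1 ?_
        have hD' : D ≠ 0 := ne_of_gt hD
        have hq : t^2 * D^2 = ε^2 / (4 * D^2) := by rw [ht_def]; field_simp; ring
        have ht2 : t * (ε * K) = (ε^2 / (4 * D^2)) * (2 * K) := by rw [ht_def]; field_simp; ring
        rw [hq, ht2]
        linarith


lemma expMeasure_Iic_zero : expMeasure 1 (Set.Iic 0) = 0 := by
  have hwd : expMeasure 1 = MeasureTheory.volume.withDensity (exponentialPDF 1) := rfl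
  rw [hwd, withDensity_apply _ measurableSet_Iic]
  have : Set.Iic (0:ℝ) = Set.Iio 0 ∪ {0} := by
    ext x; simp [le_iff_lt_or_eq]
  rw [this]
  refine le_antisymm (le_trans (lintegral_union_le _ _ _) ?_) zero_le
  rw [lintegral_exponentialPDF_of_nonpos le_rfl,
    setLIntegral_measure_zero _ _ (measure_singleton 0), add_zero]


lemma simplex_event_bound {K : ℕ} (hK : 1 ≤ K) (r : Fin K → ℝ) (a b ε : ℝ)
    (ha : 0 < a) (hε : 0 < ε)
    (hr : ∀ k, a ≤ r k ∧ r k ≤ b) (hmean : (1 + ε) * K ≤ ∑ k, r k) :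
    simplexUniform K {v | ∑ k, r k * v k ≤ 1}
      ≤ ENNReal.ofReal (Real.exp (-(ε^2 / (4 * (b - a)^2)) * K)) := by
  haveI : IsProbabilityMeasure (expMeasure 1) := isProbabilityMeasure_expMeasure one_pos
  haveI : Nonempty (Fin K) := ⟨⟨0, by omega⟩⟩
  have hKpos : (0:ℝ) < K := by exact_mod_cast Nat.lt_of_lt_of_le Nat.zero_lt_one hK
  have hb1 : 1 + ε ≤ b := by
    have h1 : ∑ k, r k ≤ ∑ _k : Fin K, b := Finset.sum_le_sum fun k _ => (hr k).2
    rw [Finset.sum_const, Finset.card_univ, Fintype.card_fin, nsmul_eq_mul] at h1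
    nlinarith
  set Pim := Measure.pi (fun _ : Fin K => expMeasure 1) with hPim
  have hφ : Measurable (fun (Y : Fin K → ℝ) (k : Fin K) => Y k / ∑ j, Y j) := by
    apply measurable_pi_lambda
    intro k
    exact (measurable_pi_apply k).div (Finset.measurable_sum univ fun j _ => measurable_pi_apply j)
  have hE : MeasurableSet {v : Fin K → ℝ | ∑ k, r k * v k ≤ 1} := by
    have : Measurable (fun v : Fin K → ℝ => ∑ k, r k * v k) :=
      Finset.measurable_sum univ fun k _ => measurable_const.mul (measurable_pi_apply k)
    exact this measurableSet_Iic
  rw [simplexUniform, Measure.map_apply hφ hE]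
  set N : Set (Fin K → ℝ) := ⋃ k, {Y | Y k ≤ 0} with hN
  have hNnull : Pim N = 0 := by
    refine measure_iUnion_null fun k => ?_
    have : {Y : Fin K → ℝ | Y k ≤ 0} = Function.eval k ⁻¹' (Set.Iic 0) := rfl
    rw [this]
    exact Measure.pi_eval_preimage_null _ expMeasure_Iic_zero
  set B : Set (Fin K → ℝ) := {Y | ∑ k, (r k - 1) * Y k ≤ 0} with hB
  have hcover : (fun (Y : Fin K → ℝ) (k : Fin K) => Y k / ∑ j, Y j) ⁻¹'
      {v | ∑ k, r k * v k ≤ 1} ⊆ B ∪ N := by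
    intro Y hY
    simp only [Set.mem_preimage, Set.mem_setOf_eq] at hY
    by_cases hpos : ∀ k, 0 < Y k
    · left
      have hS : 0 < ∑ j, Y j := Finset.sum_pos (fun j _ => hpos j) Finset.univ_nonempty
      have h1 : ∑ k, r k * (Y k / ∑ j, Y j) = (∑ k, r k * Y k) / ∑ j, Y j := by
        rw [Finset.sum_div]
        exact Finset.sum_congr rfl fun k _ => by ring
      rw [h1, div_le_one hS] at hY
      have : ∑ k, (r k - 1) * Y k = (∑ k, r k * Y k) - ∑ j, Y j := by
        rw [← Finset.sum_sub_distrib]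
        exact Finset.sum_congr rfl fun k _ => by ring
      simp only [hB, Set.mem_setOf_eq, this]
      linarith
    · right
      push_neg at hpos
      obtain ⟨k, hk⟩ := hpos
      exact Set.mem_iUnion.2 ⟨k, hk⟩
  refine le_trans (measure_mono hcover) (le_trans (measure_union_le _ _) ?_)
  rw [hNnull, add_zero]
  have hsum' : ε * K ≤ ∑ k, (r k - 1) := by
    rw [Finset.sum_sub_distrib, Finset.sum_const, Finset.card_univ, Fintype.card_fin,
      nsmul_eq_mul, mul_one]
    linarith
  rcases lt_or_ge a 1 with ha1 | ha1
  · -- main case : apply Chernoff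
    apply chernoff_exp (fun k => r k - 1) ε (b - a) hε
    · linarith
    · intro k
      rw [abs_le]
      constructor
      · have := (hr k).1; linarith
      · have := (hr k).2; linarith
    · exact hsum'
  · -- a ≥ 1 : the event is null
    have hBN : B ⊆ N := by
      intro Y hY
      simp only [hB, Set.mem_setOf_eq] at hY
      by_contra hYN
      have hpos : ∀ k, 0 < Y k := by
        intro k
        by_contra hk
        exact hYN (Set.mem_iUnion.2 ⟨k, not_lt.1 hk⟩)
      obtain ⟨k0, hk0⟩ : ∃ k0, 0 < r k0 - 1 := by
        by_contra hall
        push_neg at hall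
        have : ∑ k, (r k - 1) ≤ 0 := Finset.sum_nonpos fun k _ => hall k
        nlinarith
      have hterm : 0 < (r k0 - 1) * Y k0 := mul_pos hk0 (hpos k0)
      have hge : (r k0 - 1) * Y k0 ≤ ∑ k, (r k - 1) * Y k := by
        apply Finset.single_le_sum (f := fun k => (r k - 1) * Y k)
          (fun k _ => mul_nonneg (by have := (hr k).1; linarith) (hpos k).le) (Finset.mem_univ k0)
      linarith
    calc Pim B ≤ Pim N := measure_mono hBN
      _ = 0 := hNnull
      _ ≤ _ := zero_le


lemma card_reps (T L : ℕ) :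
    (Finset.univ.filter (fun f : Fin (L+2) → Fin T =>
      Function.Injective f ∧ ∀ m, f 0 ≤ f m)).card
      ≤ T.choose (L+2) * Nat.factorial (L+1) := by
  classical
  set S := Finset.univ.filter (fun f : Fin (L+2) → Fin T =>
      Function.Injective f ∧ ∀ m, f 0 ≤ f m) with hS
  have key : S.card * (L + 2) ≤ T.descFactorial (L+2) := by
    have hinj : Function.Injective (fun p : (↥S) × Fin (L+2) =>
        (⟨fun ℓ => (p.1 : Fin (L+2) → Fin T) (ℓ + p.2), by
          intro x y hxy
          have := (Finset.mem_filter.1 p.1.2).2.1 hxy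
          exact add_right_cancel this⟩ : Fin (L+2) ↪ Fin T)) := by
      rintro ⟨⟨f, hf⟩, m⟩ ⟨⟨f', hf'⟩, m'⟩ h
      obtain ⟨hfi, hfm⟩ := (Finset.mem_filter.1 hf).2
      obtain ⟨hfi', hfm'⟩ := (Finset.mem_filter.1 hf').2
      have heq : ∀ ℓ : Fin (L+2), f (ℓ + m) = f' (ℓ + m') := by
        intro ℓ
        exact congrFun (congrArg (fun (e : Fin (L+2) ↪ Fin T) => (e : Fin (L+2) → Fin T)) h) ℓ
      have hall : ∀ u : Fin (L+2), f u = f' (u - m + m') := by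
        intro u
        have := heq (u - m)
        rwa [sub_add_cancel] at this
      have h00 : f 0 = f' 0 := by
        have h1 : f 0 ≤ f' 0 := by
          have h := hall (m - m')
          rw [show m - m' - m + m' = 0 from by abel] at h
          calc f 0 ≤ f (m - m') := hfm _
            _ = f' 0 := h
        have h2 : f' 0 ≤ f 0 := by
          have h := hall 0
          rw [show (0 : Fin (L+2)) - m + m' = m' - m from by abel] at h
          calc f' 0 ≤ f' (m' - m) := hfm' _
            _ = f 0 := h.symm
        exact le_antisymm h1 h2
      have hmm : m = m' := by
        have h3 : f' (0 - m + m') = f' 0 := by rw [← hall 0, h00]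
        have h4 := hfi' h3
        rw [show (0 : Fin (L+2)) - m + m' = m' - m from by abel] at h4
        have h5 : m' = m := by
          have := sub_eq_zero.1 h4
          exact this
        exact h5.symm
      subst hmm
      have hff : f = f' := by
        funext u
        have := hall u
        rwa [sub_add_cancel] at this
      subst hff
      rfl
    have hcard := Fintype.card_le_of_injective _ hinj
    rw [Fintype.card_prod, Fintype.card_coe, Fintype.card_fin,
      Fintype.card_embedding_eq, Fintype.card_fin, Fintype.card_fin] at hcard
    exact hcard
  rw [Nat.descFactorial_eq_factorial_mul_choose] at key
  have h2 : Nat.factorial (L+2) = Nat.factorial (L+1) * (L+2) := by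
    rw [Nat.factorial_succ (L+1)]
    ring
  rw [h2] at key
  have : S.card * (L+2) ≤ T.choose (L+2) * Nat.factorial (L+1) * (L+2) := by
    calc S.card * (L+2) ≤ Nat.factorial (L+1) * (L+2) * T.choose (L+2) := key
      _ = T.choose (L+2) * Nat.factorial (L+1) * (L+2) := by ring
  exact Nat.le_of_mul_le_mul_right this (by omega)

end Auxiliary

/-- Vanishing empirical content of GARP: under bounded price ratios and
non-vanishing Carli dispersion on every cycle, the Selten Area
`A_K = P(GARP holds)` satisfies `A_K ≥ 1 - C_T exp (-c₁ K)`
with `c₁ = ε² / (4 (b-a)²)`. -/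
theorem selten_area_bound
    {Ω : Type*} [MeasureSpace Ω] (P : Measure Ω) [IsProbabilityMeasure P]
    (T K : ℕ) (hT : 2 ≤ T) (hK : 1 ≤ K)
    (a b ε : ℝ) (ha : 0 < a) (hab : a ≤ b) (hε : 0 < ε)
    (ρ : Fin T → Fin T → Fin K → ℝ)
    (hbd : ∀ i j, i ≠ j → ∀ k, a ≤ ρ i j k ∧ ρ i j k ≤ b)
    (hdisp : ∀ (L : ℕ), ∀ f : Fin (L + 2) → Fin T, Function.Injective f →
      ∃ ℓ : Fin (L + 2), 1 + ε ≤ ((1 : ℝ) / K) * ∑ k, ρ (f ℓ) (f (ℓ + 1)) k)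
    (w : Fin T → Ω → (Fin K → ℝ))
    (hmeas : ∀ i, Measurable (w i))
    (hindep : iIndepFun w P)
    (hdist : ∀ i, P.map (w i) = simplexUniform K) :
    1 - (∑ L ∈ Finset.Icc 2 T, (Nat.choose T L * Nat.factorial (L - 1) : ℝ≥0∞)) *
        ENNReal.ofReal (Real.exp (-(ε ^ 2 / (4 * (b - a) ^ 2)) * K))
      ≤ P {ω | SatisfiesGARP ρ (fun i => w i ω)} := by
  classical
  set ebnd : ℝ≥0∞ := ENNReal.ofReal (Real.exp (-(ε ^ 2 / (4 * (b - a) ^ 2)) * K)) with hebnd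
  set C : ℝ≥0∞ := ∑ L ∈ Finset.Icc 2 T, (Nat.choose T L * Nat.factorial (L - 1) : ℝ≥0∞)
    with hC
  -- edge events
  have hedge_meas : ∀ (i j : Fin T), MeasurableSet {ω : Ω | ∑ k, ρ i j k * w j ω k ≤ 1} :=
    fun i j => (Finset.measurable_sum Finset.univ fun k _ =>
      measurable_const.mul ((measurable_pi_apply k).comp (hmeas j))) measurableSet_Iic
  have hedge_meas' : ∀ (i j : Fin T), MeasurableSet {ω : Ω | ∑ k, ρ i j k * w j ω k < 1} :=
    fun i j => (Finset.measurable_sum Finset.univ fun k _ =>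
      measurable_const.mul ((measurable_pi_apply k).comp (hmeas j))) measurableSet_Iio
  -- the bad event
  set Bad : Set Ω := ⋃ (L : ℕ), ⋃ (f : Fin (L+2) → Fin T), ⋃ (_ : Function.Injective f),
      ((⋂ ℓ : Fin (L+2), {ω : Ω | ∑ k, ρ (f ℓ) (f (ℓ+1)) k * w (f (ℓ+1)) ω k ≤ 1})
        ∩ ⋃ ℓ : Fin (L+2), {ω : Ω | ∑ k, ρ (f ℓ) (f (ℓ+1)) k * w (f (ℓ+1)) ω k < 1})
    with hBad
  have hGeq : {ω : Ω | SatisfiesGARP ρ (fun i => w i ω)} = Badᶜ := by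
    ext ω
    simp only [hBad, SatisfiesGARP, Set.mem_setOf_eq, Set.mem_compl_iff, Set.mem_iUnion,
      Set.mem_inter_iff, Set.mem_iInter, Set.mem_setOf_eq]
    constructor
    · intro h ⟨L, f, hf, hle, ℓ, hlt⟩
      exact h ⟨L, f, hf, hle, ℓ, hlt⟩
    · intro h ⟨L, f, hf, hle, ℓ, hlt⟩
      exact h ⟨L, f, hf, hle, ℓ, hlt⟩
  have hBad_meas : MeasurableSet Bad := by
    refine MeasurableSet.iUnion fun L => MeasurableSet.iUnion fun f =>
      MeasurableSet.iUnion fun _ => MeasurableSet.inter ?_ ?_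
    · exact MeasurableSet.iInter fun ℓ => hedge_meas _ _
    · exact MeasurableSet.iUnion fun ℓ => hedge_meas' _ _
  -- the chosen dispersive edge
  set lstar : ∀ (L : ℕ), (Fin (L+2) → Fin T) → Fin (L+2) :=
    fun L f => if h : Function.Injective f then (hdisp L f h).choose else 0 with hlstar
  set A : ∀ (L : ℕ), (Fin (L+2) → Fin T) → Set Ω :=
    fun L f => {ω : Ω | ∑ k, ρ (f (lstar L f)) (f (lstar L f + 1)) k
      * w (f (lstar L f + 1)) ω k ≤ 1} with hA
  set S : ∀ L : ℕ, Finset (Fin (L+2) → Fin T) :=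
    fun L => Finset.univ.filter (fun f => Function.Injective f ∧ ∀ m, f 0 ≤ f m) with hS
  -- covering
  have hcover : Bad ⊆ ⋃ L ∈ Finset.range (T-1), ⋃ f ∈ (S L : Finset _), A L f := by
    intro ω hω
    simp only [hBad, Set.mem_iUnion, Set.mem_inter_iff, Set.mem_iInter, Set.mem_setOf_eq] at hω
    obtain ⟨L, f, hf, hle, -⟩ := hω
    have hcard : L + 2 ≤ T := by
      have := Fintype.card_le_of_injective f hf
      simpa using this
    obtain ⟨m₀, -, hm₀⟩ := Finset.exists_min_image Finset.univ f ⟨0, Finset.mem_univ 0⟩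
    set g : Fin (L+2) → Fin T := fun ℓ => f (ℓ + m₀) with hg
    have hg_inj : Function.Injective g := fun x y hxy => add_right_cancel (hf hxy)
    have hg_min : ∀ m, g 0 ≤ g m := by
      intro m
      simp only [hg, zero_add]
      exact hm₀ (m + m₀) (Finset.mem_univ _)
    have hg_le : ∀ ℓ : Fin (L+2), ∑ k, ρ (g ℓ) (g (ℓ+1)) k * w (g (ℓ+1)) ω k ≤ 1 := by
      intro ℓ
      have h1 : g (ℓ+1) = f ((ℓ + m₀) + 1) := by
        simp only [hg]
        congr 1
        abel
      rw [show g ℓ = f (ℓ + m₀) from rfl, h1]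
      exact hle (ℓ + m₀)
    refine Set.mem_iUnion₂.2 ⟨L, ?_, Set.mem_iUnion₂.2 ⟨g, ?_, ?_⟩⟩
    · exact Finset.mem_range.2 (by omega)
    · exact Finset.mem_filter.2 ⟨Finset.mem_univ _, hg_inj, hg_min⟩
    · exact hg_le _
  -- per-cycle bound
  have hAbound : ∀ L : ℕ, ∀ f ∈ (S L : Finset _), P (A L f) ≤ ebnd := by
    intro L f hfS
    have hf : Function.Injective f := ((Finset.mem_filter.1 hfS).2).1
    set ℓ0 : Fin (L+2) := lstar L f with hℓ0
    set i : Fin T := f ℓ0 with hi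
    set j : Fin T := f (ℓ0 + 1) with hj
    have hij : i ≠ j := by
      intro h
      have h2 := hf h
      simp only [left_eq_add] at h2
      exact one_ne_zero h2
    have hspec : 1 + ε ≤ ((1:ℝ)/K) * ∑ k, ρ i j k := by
      have h3 := (hdisp L f hf).choose_spec
      have h4 : ℓ0 = (hdisp L f hf).choose := by
        rw [hℓ0, hlstar]
        simp [dif_pos hf]
      rw [hi, hj, h4]
      exact h3
    have hKpos : (0:ℝ) < K := by exact_mod_cast Nat.lt_of_lt_of_le Nat.zero_lt_one hK
    have hmean : (1 + ε) * K ≤ ∑ k, ρ i j k := by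
      rw [one_div, inv_mul_eq_div, le_div_iff₀ hKpos] at hspec
      exact hspec
    have hE : MeasurableSet {v : Fin K → ℝ | ∑ k, ρ i j k * v k ≤ 1} :=
      (Finset.measurable_sum Finset.univ fun k _ =>
        measurable_const.mul (measurable_pi_apply k)) measurableSet_Iic
    have hpre : A L f = (w j) ⁻¹' {v | ∑ k, ρ i j k * v k ≤ 1} := rfl
    calc P (A L f) = (P.map (w j)) {v | ∑ k, ρ i j k * v k ≤ 1} := by
          rw [Measure.map_apply (hmeas j) hE, hpre]
      _ = simplexUniform K {v | ∑ k, ρ i j k * v k ≤ 1} := by rw [hdist j]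
      _ ≤ ebnd := simplex_event_bound hK (ρ i j) a b ε ha hε (hbd i j hij) hmean
  -- counting
  have hPBad : P Bad ≤ C * ebnd := by
    calc P Bad ≤ P (⋃ L ∈ Finset.range (T-1), ⋃ f ∈ (S L : Finset _), A L f) :=
          measure_mono hcover
      _ ≤ ∑ L ∈ Finset.range (T-1), P (⋃ f ∈ (S L : Finset _), A L f) :=
          measure_biUnion_finset_le _ _
      _ ≤ ∑ L ∈ Finset.range (T-1), ∑ f ∈ (S L : Finset _), P (A L f) :=
          Finset.sum_le_sum fun L _ => measure_biUnion_finset_le _ _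
      _ ≤ ∑ L ∈ Finset.range (T-1), ∑ _f ∈ (S L : Finset _), ebnd :=
          Finset.sum_le_sum fun L _ => Finset.sum_le_sum fun f hf => hAbound L f hf
      _ = ∑ L ∈ Finset.range (T-1), ((S L).card : ℝ≥0∞) * ebnd := by
          simp [Finset.sum_const, nsmul_eq_mul]
      _ ≤ ∑ L ∈ Finset.range (T-1), ((T.choose (L+2) * Nat.factorial (L+1) : ℕ) : ℝ≥0∞) * ebnd := by
          refine Finset.sum_le_sum fun L _ => ?_
          exact mul_le_mul_left (by exact_mod_cast Nat.cast_le.2 (card_reps T L)) _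
      _ = C * ebnd := by
          rw [← Finset.sum_mul]
          congr 1
          rw [hC]
          refine Finset.sum_nbij' (i := fun L => L + 2) (j := fun M => M - 2) ?_ ?_ ?_ ?_ ?_
          · intro L hL
            simp only [Finset.mem_range] at hL
            refine Finset.mem_Icc.2 ?_
            omega
          · intro M hM
            simp only [Finset.mem_Icc] at hM
            refine Finset.mem_range.2 ?_
            omega
          · intro L hL; omega
          · intro M hM
            simp only [Finset.mem_Icc] at hM
            omega
          · intro L hL
            have h9 : L + 2 - 1 = L + 1 := by omega
            rw [h9]
            push_cast
            ring
  -- conclude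
  rw [hGeq]
  rw [tsub_le_iff_right]
  have h1 : P Badᶜ + P Bad = 1 := by
    rw [add_comm, measure_add_measure_compl hBad_meas, measure_univ]
  calc (1:ℝ≥0∞) = P Badᶜ + P Bad := h1.symm
    _ ≤ P Badᶜ + C * ebnd := add_le_add_right hPBad _
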